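/- Let G be an undirected connected graph and f ≥ κ(G) (the vertex connectivity). Then no gossip protocol on G can satisfy ε-differential privacy with finite ε against the worst-case adversary with f curious nodes, provided f < n − 1. -/

import Mathlib

open MeasureTheory Finset

namespace GossipDP

/-- Round-by-round record of communications: `e t` is the set of communications
`(sender, receiver)` taking place in round `t`. -/
abbrev Exec (n : ℕ) := ℕ → Finset (Fin n × Fin n)

instance (n : ℕ) : MeasurableSpace (Finset (Fin n × Fin n)) := ⊤

/-- Active sets of an execution `e` started at the source `s`. -/
def active {n : ℕ} (s : Fin n) (e : Exec n) : ℕ → Finset (Fin n)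
  | 0 => {s}
  | t + 1 => (e t).image Prod.snd

/-- A valid execution of a gossip protocol on `G` from source `s`: in every round
all communications are sent by active nodes, along edges of `G` (or fictitious
self-messages). -/
def IsValidExec {n : ℕ} (G : SimpleGraph (Fin n)) (s : Fin n) (e : Exec n) : Prop :=
  ∀ t, ∀ c ∈ e t, c.1 ∈ active s e t ∧ (c.1 = c.2 ∨ G.Adj c.1 c.2)

/-- The adversary's observation for the curious set `F`: the communications
visible to `F`, shifted to start at the first round in which a curious node takes
part in a communication. -/
noncomputable def obs {n : ℕ} (F : Finset (Fin n)) (e : Exec n) : Exec n := by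
  classical
  exact fun t =>
    if h : ∃ k, ((e k).filter fun c => c.1 ∈ F ∨ c.2 ∈ F) ≠ ∅ then
      (e (Nat.find h + t)).filter fun c => c.1 ∈ F ∨ c.2 ∈ F
    else ∅

/-- `ε`-differential privacy of the protocol `P` for the curious set `F`. -/
def DPFor {n : ℕ} (P : Fin n → Measure (Exec n)) (F : Finset (Fin n)) (ε : ℝ) : Prop :=
  ∀ u v : Fin n, u ∉ F → v ∉ F →
    ∀ A : Set (Exec n), MeasurableSet A →
      P v (obs F ⁻¹' A) ≤ ENNReal.ofReal (Real.exp ε) * P u (obs F ⁻¹' A)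

/-- auxiliary: reachability in `G` avoiding the set `F`. -/
def AReach {n : ℕ} (G : SimpleGraph (Fin n)) (F : Finset (Fin n)) : Fin n → Fin n → Prop :=
  Relation.ReflTransGen (fun x y => G.Adj x y ∧ x ∉ F ∧ y ∉ F)

lemma AReach.symm {n} {G : SimpleGraph (Fin n)} {F : Finset (Fin n)} {a b : Fin n}
    (h : AReach G F a b) : AReach G F b a :=
  by
  haveI : Std.Symm (fun x y : Fin n => G.Adj x y ∧ x ∉ F ∧ y ∉ F) := ⟨fun _ _ h => ⟨h.1.symm, h.2.2, h.2.1⟩⟩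
  exact Std.Symm.symm (r := Relation.ReflTransGen (fun x y : Fin n => G.Adj x y ∧ x ∉ F ∧ y ∉ F)) _ _ h

lemma AReach.notMem {n} {G : SimpleGraph (Fin n)} {F : Finset (Fin n)} {a b : Fin n}
    (h : AReach G F a b) (ha : a ∉ F) : b ∉ F := by
  induction h with
  | refl => exact ha
  | tail _ step _ => exact step.2.2

lemma AReach.mono {n} {G : SimpleGraph (Fin n)} {K F : Finset (Fin n)} (hKF : K ⊆ F)
    {a b : Fin n} (h : AReach G F a b) : AReach G K a b :=
  Relation.ReflTransGen.mono (r := fun x y => G.Adj x y ∧ x ∉ F ∧ y ∉ F) (p := fun x y => G.Adj x y ∧ x ∉ K ∧ y ∉ K) (fun _ _ hs => ⟨hs.1, fun h' => hs.2.1 (hKF h'), fun h' => hs.2.2 (hKF h')⟩) a b h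

lemma AReach.toInduce {n} {G : SimpleGraph (Fin n)} {K : Finset (Fin n)} {a b : Fin n}
    (h : AReach G K a b) (ha : a ∉ K) :
    ∀ (hb : b ∉ K), (G.induce {v : Fin n | v ∉ K}).Reachable ⟨a, ha⟩ ⟨b, hb⟩ := by
  induction h with
  | refl => exact fun _ => SimpleGraph.Reachable.refl _
  | tail hab step ih =>
    intro hc
    have hb : _ ∉ K := step.2.1
    exact (ih hb).trans (SimpleGraph.Adj.reachable (by exact step.1))

/-- If no communication up to round `t` (exclusive) touches `F`, every active node at
round `t` is reachable from the source avoiding `F`. -/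
lemma active_reach {n} {G : SimpleGraph (Fin n)} {F : Finset (Fin n)} {s : Fin n} {e : Exec n}
    (he : IsValidExec G s e) (hs : s ∉ F) :
    ∀ t, (∀ k < t, ∀ c ∈ e k, c.1 ∉ F ∧ c.2 ∉ F) →
      ∀ w ∈ active s e t, AReach G F s w := by
  intro t
  induction t with
  | zero =>
    intro _ w hw
    simp only [active, Finset.mem_singleton] at hw
    subst hw; exact Relation.ReflTransGen.refl
  | succ t ih =>
    intro hno w hw
    simp only [active, Finset.mem_image] at hw
    obtain ⟨c, hc, hcw⟩ := hw
    have h1 := he t c hc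
    have h2 : AReach G F s c.1 := ih (fun k hk => hno k (Nat.lt_succ_of_lt hk)) c.1 h1.1
    rcases h1.2 with heq | hadj
    · rw [← hcw, ← heq]; exact h2
    · have hF := hno t (Nat.lt_succ_self t) c hc
      rw [← hcw]
      exact h2.tail ⟨hadj, hF.1, hF.2⟩

lemma obs_first {n} {G : SimpleGraph (Fin n)} {F : Finset (Fin n)} {s : Fin n} {e : Exec n}
    (he : IsValidExec G s e) (hs : s ∉ F)
    (h : ∃ k, ((e k).filter fun c => c.1 ∈ F ∨ c.2 ∈ F) ≠ ∅) :
    ∀ c ∈ obs F e 0, AReach G F s c.1 := by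
  classical
  intro c hc
  rw [obs] at hc
  rw [dif_pos h] at hc
  rw [Finset.mem_filter] at hc
  have hT : c ∈ e (Nat.find h + 0) := hc.1
  rw [Nat.add_zero] at hT
  have hmin : ∀ k < Nat.find h, ∀ c' ∈ e k, c'.1 ∉ F ∧ c'.2 ∉ F := by
    intro k hk c' hc'
    have := Nat.find_min h hk
    rw [not_ne_iff, Finset.filter_eq_empty_iff] at this
    have := this hc'
    push_neg at this
    exact this
  exact active_reach he hs (Nat.find h) hmin c.1 (he (Nat.find h) c hT).1

/-- Let `G` be an undirected connected graph of size `n` and let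
`f` satisfy `κ(G) ≤ f < n − 1` (here `κ(G) ≤ f` is witnessed by a vertex cut `K`
of size at most `f` whose removal disconnects `G`).  Then no (valid,
disseminating) gossip protocol on `G` can satisfy `ε`-differential privacy with
finite `ε` against the worst-case adversary with `f` curious nodes: for every
`ε : ℝ` there is a curious set `F` of size `f` for which `ε`-DP fails. -/
theorem stmt_13 {n f : ℕ} (hf : 1 ≤ f) (hfn : f < n - 1)
    (G : SimpleGraph (Fin n)) (hconn : G.Connected)
    (hκ : ∃ K : Finset (Fin n), K.card ≤ f ∧
        ¬ (G.induce {v : Fin n | v ∉ K}).Connected)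
    (P : Fin n → Measure (Exec n)) (hprob : ∀ s, IsProbabilityMeasure (P s))
    (hvalid : ∀ s, P s {e | ¬ IsValidExec G s e} = 0)
    (hdiss : ∀ s, P s {e | ∀ v : Fin n, ∃ t, v ∈ active s e t} = 1) :
    ∀ ε : ℝ, ∃ F : Finset (Fin n), F.card = f ∧ ¬ DPFor P F ε := by
  classical
  intro ε
  obtain ⟨K, hKcard, hKdisc⟩ := hκ
  have hn3 : 3 ≤ n := by omega
  -- extract two vertices in different components of G - K
  rw [SimpleGraph.connected_iff] at hKdisc
  push_neg at hKdisc
  have hne : Nonempty ({v : Fin n | v ∉ K}) := by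
    have : Kᶜ.Nonempty := by
      rw [← Finset.card_pos, Finset.card_compl]
      simp only [Fintype.card_fin]
      omega
    obtain ⟨x, hx⟩ := this
    exact ⟨⟨x, by simpa using hx⟩⟩
  obtain ⟨a, b, hab⟩ : ∃ a b : ({v : Fin n | v ∉ K}),
      ¬ (G.induce {v : Fin n | v ∉ K}).Reachable a b := by
    by_contra hcon
    push_neg at hcon
    exact (hKdisc (fun a b => hcon a b)).false hne.some
  set u : Fin n := a.1 with hu_def
  set v : Fin n := b.1 with hv_def
  have hu : u ∉ K := a.2
  have hv : v ∉ K := b.2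
  have huv : u ≠ v := by
    intro h
    exact hab (by rw [Subtype.ext h])
  -- build F
  have hKsub : K ⊆ Finset.univ \ {u, v} := by
    intro x hx
    simp only [Finset.mem_sdiff, Finset.mem_univ, Finset.mem_insert, Finset.mem_singleton, true_and]
    rintro (rfl | rfl) <;> [exact hu hx; exact hv hx]
  have hcard2 : (Finset.univ \ ({u, v} : Finset (Fin n))).card = n - 2 := by
    rw [Finset.card_sdiff_of_subset (by simp), Finset.card_univ, Fintype.card_fin,
      Finset.card_insert_of_notMem (by simpa using huv), Finset.card_singleton]
  obtain ⟨F, hKF, hFsub, hFcard⟩ :=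
    Finset.exists_subsuperset_card_eq hKsub (le_trans hKcard (le_refl f)) (by omega)
  have huF : u ∉ F := fun h => by
    have := hFsub h; simp at this
  have hvF : v ∉ F := fun h => by
    have := hFsub h; simp at this
  refine ⟨F, hFcard, ?_⟩
  -- no AReach between u and v avoiding F
  have hnoreach : ¬ AReach G F u v := by
    intro h
    exact hab ((h.mono hKF).toInduce hu hv)
  intro hDP
  -- the distinguishing event
  set A : Set (Exec n) := {e : Exec n | ∃ c ∈ e 0, AReach G F v c.1} with hA_def
  have hAmeas : MeasurableSet A := by
    have : A = (fun e : Exec n => e 0) ⁻¹'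
        {S : Finset (Fin n × Fin n) | ∃ c ∈ S, AReach G F v c.1} := rfl
    rw [this]
    exact measurable_pi_apply 0 trivial
  -- P u of the preimage is 0
  have hu0 : P u (obs F ⁻¹' A) = 0 := by
    apply MeasureTheory.measure_mono_null _ (hvalid u)
    intro e he
    simp only [Set.mem_preimage, hA_def, Set.mem_setOf_eq] at he
    obtain ⟨c, hc, hreach⟩ := he
    intro hval
    have hex : ∃ k, ((e k).filter fun c => c.1 ∈ F ∨ c.2 ∈ F) ≠ ∅ := by
      by_contra hnex
      rw [obs, dif_neg hnex] at hc
      exact absurd hc (Finset.notMem_empty c)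
    have := obs_first hval huF hex c hc
    exact hnoreach (this.trans hreach.symm)
  -- P v of the preimage is ≥ 1
  have hv1 : (1 : ENNReal) ≤ P v (obs F ⁻¹' A) := by
    have hsub : {e : Exec n | ∀ w : Fin n, ∃ t, w ∈ active v e t} ⊆
        (obs F ⁻¹' A) ∪ {e | ¬ IsValidExec G v e} := by
      intro e he
      by_cases hval : IsValidExec G v e
      · left
        -- F is nonempty
        obtain ⟨w, hw⟩ : F.Nonempty := Finset.card_pos.mp (by omega)
        obtain ⟨t, ht⟩ := he w
        have hex : ∃ k, ((e k).filter fun c => c.1 ∈ F ∨ c.2 ∈ F) ≠ ∅ := by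
          cases t with
          | zero =>
            simp only [active, Finset.mem_singleton] at ht
            exact absurd (ht ▸ hw) hvF
          | succ t =>
            simp only [active, Finset.mem_image] at ht
            obtain ⟨c, hc, hcw⟩ := ht
            refine ⟨t, ?_⟩
            apply Finset.ne_empty_of_mem (a := c)
            rw [Finset.mem_filter]
            exact ⟨hc, Or.inr (hcw ▸ hw)⟩
        -- obs F e 0 is nonempty
        have hne0 : obs F e 0 ≠ ∅ := by
          rw [obs, dif_pos hex]
          simpa using Nat.find_spec hex
        obtain ⟨c, hc⟩ := Finset.nonempty_iff_ne_empty.mpr hne0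
        exact ⟨c, hc, obs_first hval hvF hex c hc⟩
      · right; exact hval
    have := MeasureTheory.measure_mono (μ := P v) hsub
    rw [hdiss v] at this
    calc (1 : ENNReal) ≤ P v ((obs F ⁻¹' A) ∪ {e | ¬ IsValidExec G v e}) := this
      _ ≤ P v (obs F ⁻¹' A) + P v {e | ¬ IsValidExec G v e} := MeasureTheory.measure_union_le _ _
      _ = P v (obs F ⁻¹' A) := by rw [hvalid v, add_zero]
  have := hDP u v huF hvF A hAmeas
  rw [hu0, mul_zero] at this
  exact absurd (le_trans hv1 this) (by simp)

end GossipDP
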